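/- arXiv:1709.08060 — 5 statements merged into one kernel-verified Lean document; each statement's English description precedes it below -/
import Mathlib

section
/- Let K=(G,M,I) be a finite formal context and K_a the context obtained by adding a fresh attribute a with extension a' ⊆ G. Then |𝔅(K_a)| − |𝔅(K)| = h(a), and h(a) ≤ |𝔅(K)|; in particular |𝔅(K_a)| ≤ 2·|𝔅(K)|. -/
/-- The intent (attribute derivation) of a set of objects. -/
def intentOf {G M : Type*} (I : G → M → Prop) (A : Set G) : Set M :=
  {m | ∀ g ∈ A, I g m}

/-- The extent (object derivation) of a set of attributes. -/
def extentOf {G M : Type*} (I : G → M → Prop) (B : Set M) : Set G :=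
  {g | ∀ m ∈ B, I g m}

/-- The formal concepts of a context: pairs `(A, B)` with `A' = B` and `B' = A`. -/
def Concepts {G M : Type*} (I : G → M → Prop) : Set (Set G × Set M) :=
  {p | intentOf I p.1 = p.2 ∧ extentOf I p.2 = p.1}

/-- The extents of a context: sets of objects with `A'' = A`. -/
def Extents {G M : Type*} (I : G → M → Prop) : Set (Set G) :=
  {A | extentOf I (intentOf I A) = A}

/-- The augmented context `K_a`: a fresh attribute (coded as `none : Option M`)
is added, with prescribed extension `aext ⊆ G`. -/
def addAttr {G M : Type*} (I : G → M → Prop) (aext : Set G) :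
    G → Option M → Prop :=
  fun g m => match m with
    | none => g ∈ aext
    | some m' => I g m'

/-- `H(a) = {A ∩ a' | A ∈ Ext(K), A ∩ a' ∉ Ext(K)}`. -/
def Hset {G M : Type*} (I : G → M → Prop) (aext : Set G) : Set (Set G) :=
  {X | (∃ A ∈ Extents I, X = A ∩ aext) ∧ X ∉ Extents I}

section Aux

variable {G M : Type*}

lemma subset_cl (I : G → M → Prop) (X : Set G) : X ⊆ extentOf I (intentOf I X) :=
  fun g hg m hm => hm g hg

lemma cl_mono (I : G → M → Prop) {X Y : Set G} (h : X ⊆ Y) :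
    extentOf I (intentOf I X) ⊆ extentOf I (intentOf I Y) :=
  fun g hg m hm => hg m (fun x hx => hm x (h hx))

lemma cl_mem_Extents (I : G → M → Prop) (X : Set G) :
    extentOf I (intentOf I X) ∈ Extents I := by
  apply Set.Subset.antisymm
  · intro g hg m hm
    exact hg m (fun x hx => hx m hm)
  · exact subset_cl I _

lemma mem_clJ (I : G → M → Prop) (aext X : Set G) (g : G) :
    g ∈ extentOf (addAttr I aext) (intentOf (addAttr I aext) X) ↔
      g ∈ extentOf I (intentOf I X) ∧ (X ⊆ aext → g ∈ aext) := by
  constructor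
  · intro hg
    refine ⟨fun m hm => hg (some m) (fun x hx => hm x hx), fun hXa => hg none (fun x hx => hXa hx)⟩
  · rintro ⟨h1, h2⟩ m hm
    cases m with
    | none => exact h2 (fun x hx => hm x hx)
    | some m' => exact h1 m' (fun x hx => hm x hx)

lemma Hset_eq_cap (I : G → M → Prop) {aext X : Set G} (hX : X ∈ Hset I aext) :
    X = extentOf I (intentOf I X) ∩ aext := by
  obtain ⟨⟨A, hA, rfl⟩, _⟩ := hX
  apply Set.Subset.antisymm
  · exact Set.subset_inter (subset_cl I _) Set.inter_subset_right
  · intro g hg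
    have hsub : extentOf I (intentOf I (A ∩ aext)) ⊆ A := by
      have := cl_mono I (Set.inter_subset_left (s := A) (t := aext))
      rwa [hA] at this
    exact ⟨hsub hg.1, hg.2⟩

lemma extents_addAttr (I : G → M → Prop) (aext : Set G) :
    Extents (addAttr I aext) = Extents I ∪ Hset I aext := by
  ext X
  constructor
  · intro hX
    by_cases hE : X ∈ Extents I
    · exact Or.inl hE
    · refine Or.inr ⟨⟨extentOf I (intentOf I X), cl_mem_Extents I X, ?_⟩, hE⟩
      by_cases hsub : X ⊆ aext
      · ext g
        constructor
        · intro hg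
          exact ⟨subset_cl I X hg, hsub hg⟩
        · intro ⟨h1, h2⟩
          have : g ∈ extentOf (addAttr I aext) (intentOf (addAttr I aext) X) :=
            (mem_clJ I aext X g).2 ⟨h1, fun _ => h2⟩
          rwa [hX] at this
      · exfalso
        apply hE
        show extentOf I (intentOf I X) = X
        apply Set.Subset.antisymm
        · intro g hg
          have : g ∈ extentOf (addAttr I aext) (intentOf (addAttr I aext) X) :=
            (mem_clJ I aext X g).2 ⟨hg, fun h => absurd h hsub⟩
          rwa [hX] at this
        · exact subset_cl I X
  · intro hX
    cases hX with
    | inl hE =>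
      show extentOf (addAttr I aext) (intentOf (addAttr I aext) X) = X
      ext g
      rw [mem_clJ]
      constructor
      · intro ⟨h1, _⟩
        rwa [hE] at h1
      · intro hg
        exact ⟨subset_cl I X hg, fun h => h hg⟩
    | inr hH =>
      have hcap := Hset_eq_cap I hH
      show extentOf (addAttr I aext) (intentOf (addAttr I aext) X) = X
      ext g
      rw [mem_clJ]
      constructor
      · intro ⟨h1, h2⟩
        rw [hcap]
        refine ⟨h1, h2 ?_⟩
        rw [hcap]
        exact Set.inter_subset_right
      · intro hg
        refine ⟨subset_cl I X hg, fun _ => ?_⟩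
        rw [hcap] at hg
        exact hg.2

noncomputable def conceptsEquivExtents (I : G → M → Prop) : Concepts I ≃ Extents I where
  toFun p := ⟨p.1.1, by
    have h := p.2
    show extentOf I (intentOf I p.1.1) = p.1.1
    rw [h.1]; exact h.2⟩
  invFun A := ⟨(A.1, intentOf I A.1), rfl, A.2⟩
  left_inv p := by
    apply Subtype.ext
    have h := p.2
    exact Prod.ext rfl h.1
  right_inv A := rfl

end Aux

/-- The increase in the number of concepts due to adding the attribute `a` is
`h(a) = |H(a)|`, and `h(a) ≤ |𝔅(K)|`; in particular `|𝔅(K_a)| ≤ 2·|𝔅(K)|`. -/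
theorem stmt4 {G M : Type*} [Fintype G] [Fintype M] (I : G → M → Prop)
    (aext : Set G) :
    Nat.card (Concepts (addAttr I aext)) =
        Nat.card (Concepts I) + Nat.card (Hset I aext) ∧
    Nat.card (Hset I aext) ≤ Nat.card (Concepts I) ∧
    Nat.card (Concepts (addAttr I aext)) ≤ 2 * Nat.card (Concepts I) := by
  classical
  have hCJ : Nat.card (Concepts (addAttr I aext)) = Nat.card (Extents (addAttr I aext)) :=
    Nat.card_congr (conceptsEquivExtents _)
  have hCI : Nat.card (Concepts I) = Nat.card (Extents I) :=
    Nat.card_congr (conceptsEquivExtents _)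
  have hdisj : Disjoint (Extents I) (Hset I aext) := by
    rw [Set.disjoint_right]
    intro X hX
    exact hX.2
  have hunion : Nat.card (Extents (addAttr I aext)) =
      Nat.card (Extents I) + Nat.card (Hset I aext) := by
    rw [extents_addAttr]
    rw [Nat.card_coe_set_eq, Nat.card_coe_set_eq, Nat.card_coe_set_eq]
    exact Set.ncard_union_eq hdisj (Set.toFinite _) (Set.toFinite _)
  have hle : Nat.card (Hset I aext) ≤ Nat.card (Extents I) := by
    have : Finite (Extents I) := (Set.toFinite _).to_subtype
    apply Nat.card_le_card_of_injective
      (f := fun X : Hset I aext => (⟨extentOf I (intentOf I X.1), cl_mem_Extents I X.1⟩ : Extents I))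
    intro X Y hXY
    apply Subtype.ext
    rw [Hset_eq_cap I X.2, Hset_eq_cap I Y.2]
    have : extentOf I (intentOf I X.1) = extentOf I (intentOf I Y.1) :=
      congrArg Subtype.val hXY
    rw [this]
  refine ⟨by rw [hCJ, hCI, hunion], by rw [hCI]; exact hle, ?_⟩
  rw [hCJ, hCI, hunion]
  omega
end

section
/- Let K=(G,M,I) be a finite formal context with ∅'' ≠ ∅, and let K_a be the context obtained by adding a fresh attribute a whose extension is a' = G \ ∅''. Then |𝔅(K_a)| = 2·|𝔅(K)|. -/
/-- If `∅'' ≠ ∅` and the added attribute `a` has extension `a' = G \ ∅''`,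
then `|𝔅(K_a)| = 2 · |𝔅(K)|`. -/
theorem stmt6 {G M : Type*} [Fintype G] [Fintype M] (I : G → M → Prop)
    (hne : extentOf I (intentOf I (∅ : Set G)) ≠ ∅) :
    Nat.card (Concepts (addAttr I (extentOf I (intentOf I (∅ : Set G)))ᶜ)) =
      2 * Nat.card (Concepts I) := by
  classical
  set E : Set G := extentOf I (intentOf I (∅ : Set G)) with hEdef
  set J : G → Option M → Prop := addAttr I Eᶜ with hJdef
  have hEfull : ∀ g ∈ E, ∀ m, I g m := fun g hg m => hg m (fun g' hg' => hg'.elim)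
  have hEsub : ∀ B : Set M, E ⊆ extentOf I B := fun B g hg m _ => hEfull g hg m
  have hEne : E.Nonempty := Set.nonempty_iff_ne_empty.mpr hne
  have hIntInter : ∀ A : Set G, intentOf I (A ∩ Eᶜ) = intentOf I A := by
    intro A; ext m
    constructor
    · intro h g hg
      by_cases hgE : g ∈ E
      · exact hEfull g hgE m
      · exact h g ⟨hg, hgE⟩
    · intro h g hg; exact h g hg.1
  have hsome_int : ∀ (A : Set G) (m : M), some m ∈ intentOf J A ↔ m ∈ intentOf I A :=
    fun A m => Iff.rfl
  have hnone_int : ∀ A : Set G, none ∈ intentOf J A ↔ A ⊆ Eᶜ := fun A => Iff.rfl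
  have hext_a : ∀ Bh : Set (Option M), extentOf J Bh =
      extentOf I (Option.some ⁻¹' Bh) ∩ (if none ∈ Bh then Eᶜ else Set.univ) := by
    intro Bh; ext g
    constructor
    · intro h
      refine ⟨fun m hm => h (some m) hm, ?_⟩
      split_ifs with hn
      · exact h none hn
      · trivial
    · rintro ⟨h1, h2⟩ m hm
      cases m with
      | none =>
        rw [if_pos hm] at h2
        exact h2
      | some m' => exact h1 m' hm
  have hpre : ∀ B : Set M, Option.some ⁻¹' (insert none (Option.some '' B)) = B := by
    intro B; ext m; simp
  -- the target of the bijection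
  set tgt : Bool × (Set G × Set M) → Set G × Set (Option M) := fun p =>
    if p.1 then (p.2.1 ∩ Eᶜ, insert none (Option.some '' p.2.2))
    else (p.2.1, Option.some '' p.2.2) with htgtdef
  have htgt : ∀ (b : Bool) (c : Set G × Set M), c ∈ Concepts I → tgt (b, c) ∈ Concepts J := by
    rintro b ⟨A, B⟩ ⟨h1, h2⟩
    have h1' : intentOf I A = B := h1
    have h2' : extentOf I B = A := h2
    have hEA : E ⊆ A := h2' ▸ hEsub B
    cases b with
    | false =>
      simp only [htgtdef, if_neg Bool.false_ne_true]
      constructor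
      · ext m
        cases m with
        | none =>
          simp only [hnone_int]
          constructor
          · intro h
            obtain ⟨g, hg⟩ := hEne
            exact absurd (h (hEA hg)) (by simp [hg])
          · intro h; exact absurd h (by simp)
        | some m' =>
          rw [hsome_int, h1']
          simp
      · rw [hext_a]
        have : Option.some ⁻¹' (Option.some '' B) = B := Set.preimage_image_eq B (Option.some_injective M)
        rw [this, if_neg (by simp), Set.inter_univ, h2']
    | true =>
      simp only [htgtdef, if_pos rfl]
      constructor
      · ext m
        cases m with
        | none => simp [hnone_int, Set.inter_subset_right]
        | some m' =>
          rw [hsome_int]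
          have : (A ∩ Eᶜ) = (A ∩ Eᶜ) := rfl
          rw [show intentOf I (A ∩ Eᶜ) = B from (hIntInter A).trans h1']
          simp
      · rw [hext_a]
        have : Option.some ⁻¹' (insert none (Option.some '' B)) = B := by
          ext m; simp
        rw [this, if_pos (by simp), h2']
  set f : Bool × ↥(Concepts I) → ↥(Concepts J) :=
    fun p => ⟨tgt (p.1, p.2.1), htgt p.1 p.2.1 p.2.2⟩ with hfdef
  have hbij : Function.Bijective f := by
    constructor
    · rintro ⟨b₁, ⟨⟨A₁, B₁⟩, hc₁⟩⟩ ⟨b₂, ⟨⟨A₂, B₂⟩, hc₂⟩⟩ h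
      have h' : tgt (b₁, (A₁, B₁)) = tgt (b₂, (A₂, B₂)) := congrArg Subtype.val h
      have hb : b₁ = b₂ := by
        by_contra hbne
        have hnone : ∀ b (A : Set G) (B : Set M),
            (none ∈ (tgt (b, (A, B))).2 ↔ b = true) := by
          intro b A B
          cases b <;> simp [htgtdef]
        have := (hnone b₁ A₁ B₁).symm.trans (h' ▸ (hnone b₂ A₂ B₂))
        cases b₁ <;> cases b₂ <;> simp_all
      subst hb
      cases b₁ with
      | false =>
        simp only [htgtdef, if_neg Bool.false_ne_true, Prod.mk.injEq] at h'
        have hB : B₁ = B₂ := by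
          have := h'.2
          rwa [Set.image_eq_image (Option.some_injective M)] at this
        simp [Prod.ext_iff, Subtype.ext_iff, h'.1, hB]
      | true =>
        simp only [htgtdef, if_pos rfl, Prod.mk.injEq] at h'
        have hB : B₁ = B₂ := by
          rw [← hpre B₁, ← hpre B₂, h'.2]
        have hA : A₁ = A₂ := by
          have e1 : extentOf I B₁ = A₁ := hc₁.2
          have e2 : extentOf I B₂ = A₂ := hc₂.2
          rw [← e1, ← e2, hB]
        simp [Prod.ext_iff, Subtype.ext_iff, hA, hB]
    · rintro ⟨⟨A, Bh⟩, h1, h2⟩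
      have h1 : intentOf J A = Bh := h1
      have h2 : extentOf J Bh = A := h2
      set B : Set M := Option.some ⁻¹' Bh with hBdef
      have hIA : intentOf I A = B := by
        ext m
        rw [← hsome_int A m, h1]
        exact Iff.rfl
      by_cases hn : none ∈ Bh
      · have hA : A = extentOf I B ∩ Eᶜ := by
          rw [← h2, hext_a, if_pos hn]
        have hconc : (extentOf I B, B) ∈ Concepts I := by
          constructor
          · have : intentOf I (extentOf I B ∩ Eᶜ) = B := by rw [← hA, hIA]
            rwa [hIntInter] at this
          · rfl
        refine ⟨(true, ⟨(extentOf I B, B), hconc⟩), ?_⟩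
        apply Subtype.ext
        simp only [hfdef, htgtdef, if_pos rfl]
        refine Prod.ext ?_ ?_
        · exact hA.symm
        · show insert none (Option.some '' B) = Bh
          ext m
          cases m with
          | none => simpa using hn
          | some m' =>
            simp only [Set.mem_insert_iff, reduceCtorEq, false_or, Set.mem_image,
              Option.some.injEq, hBdef, Set.mem_preimage]
            constructor
            · rintro ⟨x, hx, rfl⟩; exact hx
            · intro h; exact ⟨m', h, rfl⟩
      · have hA : A = extentOf I B := by
          rw [← h2, hext_a, if_neg hn, Set.inter_univ]
        have hconc : (A, B) ∈ Concepts I := ⟨hIA, hA.symm⟩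
        refine ⟨(false, ⟨(A, B), hconc⟩), ?_⟩
        apply Subtype.ext
        simp only [hfdef, htgtdef, if_neg Bool.false_ne_true]
        refine Prod.ext rfl ?_
        show Option.some '' B = Bh
        ext m
        cases m with
        | none => simpa using hn
        | some m' =>
          simp only [Set.mem_image, Option.some.injEq, hBdef, Set.mem_preimage]
          constructor
          · rintro ⟨x, hx, rfl⟩; exact hx
          · intro h; exact ⟨m', h, rfl⟩
  have := Nat.card_eq_of_bijective f hbij
  rw [← this, Nat.card_prod]
  simp [Nat.card_eq_fintype_card]
end

section
/- For n ≥ 2 and 1 ≤ k < n, the formal context K_02 = (S_n ∪ {g_1}, S_n ∪ {m_2}, I), where (g,m) ∈ I iff g,m ∈ S_n and g ≠ m, or g = g_1 and m ∈ S_n, or g ∈ {k+1,…,n} and m = m_2, has exactly 2^n + 2^{n−k} formal concepts; likewise the context K_01 = (S_n ∪ {g_1}, S_n ∪ {m_1}, I) with m_1' = {1,…,k} has exactly 2^n + 2^k formal concepts. -/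
/-- The context `K_02 = (S_n ∪ {g_1}, S_n ∪ {m_2}, I)`: objects are
`Fin n ⊕ Unit` (with `Sum.inr () = g_1`, and `i : Fin n` coding the element
`i+1` of `S_n = {1,…,n}`), attributes are `Fin n ⊕ Unit` (with
`Sum.inr () = m_2`); `(g, m) ∈ I` iff `g, m ∈ S_n` and `g ≠ m`, or `g = g_1`
and `m ∈ S_n`, or `g ∈ {k+1,…,n}` (i.e. `k ≤ i` for the code `i`) and
`m = m_2`. -/
def I02 (n k : ℕ) : (Fin n ⊕ Unit) → (Fin n ⊕ Unit) → Prop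
  | Sum.inl g, Sum.inl m => g ≠ m
  | Sum.inr _, Sum.inl _ => True
  | Sum.inl g, Sum.inr _ => k ≤ (g : ℕ)
  | Sum.inr _, Sum.inr _ => False

/-- The context `K_01 = (S_n ∪ {g_1}, S_n ∪ {m_1}, I)` with
`m_1' = {1,…,k}` (i.e. the codes `i < k`). -/
def I01 (n k : ℕ) : (Fin n ⊕ Unit) → (Fin n ⊕ Unit) → Prop
  | Sum.inl g, Sum.inl m => g ≠ m
  | Sum.inr _, Sum.inl _ => True
  | Sum.inl g, Sum.inr _ => (g : ℕ) < k
  | Sum.inr _, Sum.inr _ => False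

def Igen (n : ℕ) (P : Fin n → Prop) : (Fin n ⊕ Unit) → (Fin n ⊕ Unit) → Prop
  | Sum.inl g, Sum.inl m => g ≠ m
  | Sum.inr _, Sum.inl _ => True
  | Sum.inl g, Sum.inr _ => P g
  | Sum.inr _, Sum.inr _ => False

def fgen (n : ℕ) (P : Fin n → Prop) :
    Set (Fin n) ⊕ Set {i : Fin n // P i} → Set (Fin n ⊕ Unit) × Set (Fin n ⊕ Unit)
  | Sum.inl A => (Sum.inl '' A ∪ {Sum.inr ()}, Sum.inl '' Aᶜ)
  | Sum.inr s => (Sum.inl '' (Subtype.val '' s), Sum.inl '' (Subtype.val '' s)ᶜ ∪ {Sum.inr ()})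

lemma fgen_concept (n : ℕ) (P : Fin n → Prop) (x : Set (Fin n) ⊕ Set {i : Fin n // P i}) :
    fgen n P x ∈ Concepts (Igen n P) := by
  cases x with
  | inl A =>
    constructor
    · ext m
      cases m with
      | inl m =>
        simp [intentOf, fgen, Igen]
        constructor
        · intro h hm; exact h m hm rfl
        · intro h a ha he; exact h (he ▸ ha)
      | inr u => simp [intentOf, fgen, Igen]
    · ext g
      cases g with
      | inl g =>
        simp [extentOf, fgen, Igen]
        constructor
        · intro h; by_contra hg; exact h g hg rfl
        · intro hg a ha hga; exact ha (hga ▸ hg)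
      | inr u => simp [extentOf, fgen, Igen]
  | inr s =>
    constructor
    · ext m
      cases m with
      | inl m =>
        simp [intentOf, fgen, Igen]
        constructor
        · intro h hPm hms; exact h m m hPm hms rfl rfl
        · intro h a x hPx hxs hxa ham; subst hxa; subst ham; exact h hPx hxs
      | inr u =>
        simp [intentOf, fgen, Igen]
        intro a x hPx _ hxa; exact hxa ▸ hPx
    · ext g
      cases g with
      | inl g =>
        simp [extentOf, fgen, Igen]
        constructor
        · rintro ⟨hPg, h⟩
          by_contra hc
          push_neg at hc
          exact h g hc rfl
        · rintro ⟨hPg, hgs⟩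
          refine ⟨hPg, ?_⟩
          intro a ha hga; subst hga; exact ha hPg hgs
      | inr u => simp [extentOf, fgen, Igen]

lemma fgen_inj (n : ℕ) (P : Fin n → Prop) : Function.Injective (fgen n P) := by
  intro x y h
  cases x with
  | inl A =>
    cases y with
    | inl A' =>
      have h1 := congrArg Prod.snd h
      simp only [fgen] at h1
      have h2 : Aᶜ = A'ᶜ :=
        Set.image_injective.mpr (Sum.inl_injective (β := Unit)) h1
      simpa using congrArg compl h2
    | inr s =>
      exfalso
      have h1 := congrArg Prod.fst h
      simp only [fgen] at h1
      have : (Sum.inr () : Fin n ⊕ Unit) ∈ Sum.inl '' (Subtype.val '' s) := by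
        rw [← h1]; right; rfl
      simp at this
  | inr s =>
    cases y with
    | inl A' =>
      exfalso
      have h1 := congrArg Prod.fst h
      simp only [fgen] at h1
      have : (Sum.inr () : Fin n ⊕ Unit) ∈ Sum.inl '' (Subtype.val '' s) := by
        rw [h1]; right; rfl
      simp at this
    | inr s' =>
      have h1 := congrArg Prod.fst h
      simp only [fgen] at h1
      have h2 := Set.image_injective.mpr (Sum.inl_injective (β := Unit)) h1
      have h3 := Set.image_injective.mpr Subtype.val_injective h2
      rw [h3]

lemma fgen_surj (n : ℕ) (P : Fin n → Prop) (p : Set (Fin n ⊕ Unit) × Set (Fin n ⊕ Unit))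
    (hp : p ∈ Concepts (Igen n P)) : ∃ x, fgen n P x = p := by
  obtain ⟨A, B⟩ := p
  obtain ⟨hB, hA⟩ := hp
  dsimp only at hB hA
  set A₀ : Set (Fin n) := {i | Sum.inl i ∈ A} with hA₀
  by_cases hg : (Sum.inr () : Fin n ⊕ Unit) ∈ A
  · refine ⟨Sum.inl A₀, ?_⟩
    simp only [fgen, Prod.mk.injEq]
    constructor
    · ext g
      cases g with
      | inl g => simp [hA₀]
      | inr u => simpa using hg
    · rw [← hB]
      ext m
      cases m with
      | inl m =>
        simp [intentOf, Igen, hA₀]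
        constructor
        · intro h a ha hae; exact h (hae ▸ ha)
        · intro h hm; exact h m hm rfl
      | inr u =>
        simp [intentOf, Igen]
        intro _; exact ⟨(), hg⟩
  · have hm2 : (Sum.inr () : Fin n ⊕ Unit) ∈ B := by
      by_contra hm2
      apply hg
      rw [← hA]
      intro m hm
      cases m with
      | inl m => trivial
      | inr u => exact absurd hm hm2
    have hPA : ∀ i ∈ A₀, P i := by
      intro i hi
      have : Sum.inl i ∈ extentOf (Igen n P) B := hA ▸ hi
      exact this (Sum.inr ()) hm2
    refine ⟨Sum.inr {j | (j : Fin n) ∈ A₀}, ?_⟩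
    have hval : Subtype.val '' {j : {i : Fin n // P i} | (j : Fin n) ∈ A₀} = A₀ := by
      ext i
      constructor
      · rintro ⟨⟨j, hj⟩, hji, rfl⟩; exact hji
      · intro hi; exact ⟨⟨i, hPA i hi⟩, hi, rfl⟩
    simp only [fgen, hval, Prod.mk.injEq]
    constructor
    · ext g
      cases g with
      | inl g => simp [hA₀]
      | inr u => simpa using hg
    · rw [← hB]
      ext m
      cases m with
      | inl m =>
        simp [intentOf, Igen, hA₀]
        constructor
        · intro h a ha hae; exact h (hae ▸ ha)
        · intro h hm; exact h m hm rfl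
      | inr u =>
        simp [intentOf, Igen]
        exact ⟨hPA, fun b hb => by cases b; exact hg hb⟩

lemma card_gen (n : ℕ) (P : Fin n → Prop) :
    Nat.card (Concepts (Igen n P)) = 2 ^ n + 2 ^ (Nat.card {i : Fin n // P i}) := by
  classical
  have e : (Set (Fin n) ⊕ Set {i : Fin n // P i}) ≃ Concepts (Igen n P) :=
    Equiv.ofBijective (fun x => ⟨fgen n P x, fgen_concept n P x⟩)
      ⟨fun x y h => fgen_inj n P (by simpa using congrArg Subtype.val h),
       fun q => by
         obtain ⟨x, hx⟩ := fgen_surj n P q.1 q.2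
         exact ⟨x, Subtype.ext hx⟩⟩
  rw [← Nat.card_congr e, Nat.card_sum]
  have hset : ∀ (α : Type) [Fintype α], Nat.card (Set α) = 2 ^ Fintype.card α := by
    intro α _
    rw [Nat.card_eq_fintype_card, Fintype.card_set]
  rw [hset (Fin n), hset {i : Fin n // P i}, Fintype.card_fin, Nat.card_eq_fintype_card]

theorem stmt8' (n k : ℕ) (hn : 2 ≤ n) (hk1 : 1 ≤ k) (hkn : k < n) :
    Nat.card (Concepts (Igen n (fun g => k ≤ (g : ℕ)))) = 2 ^ n + 2 ^ (n - k) ∧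
    Nat.card (Concepts (Igen n (fun g => (g : ℕ) < k))) = 2 ^ n + 2 ^ k := by
  constructor
  · rw [card_gen]
    congr 2
    have e : {i : Fin n // k ≤ (i : ℕ)} ≃ Fin (n - k) :=
      { toFun := fun i => ⟨i.1 - k, by have := i.1.isLt; have := i.2; omega⟩
        invFun := fun j => ⟨⟨k + j.1, by have := j.isLt; omega⟩, by simp⟩
        left_inv := fun i => by
          apply Subtype.ext; apply Fin.ext; simp; have := i.2; omega
        right_inv := fun j => by apply Fin.ext; simp }
    rw [Nat.card_congr e, Nat.card_eq_fintype_card, Fintype.card_fin]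
  · rw [card_gen]
    congr 2
    have e : {i : Fin n // (i : ℕ) < k} ≃ Fin k :=
      { toFun := fun i => ⟨i.1, i.2⟩
        invFun := fun j => ⟨⟨j.1, lt_of_lt_of_le j.isLt hkn.le⟩, j.isLt⟩
        left_inv := fun i => by apply Subtype.ext; apply Fin.ext; simp
        right_inv := fun j => by apply Fin.ext; simp }
    rw [Nat.card_congr e, Nat.card_eq_fintype_card, Fintype.card_fin]

/-- For `n ≥ 2` and `1 ≤ k < n`, the context `K_02` has exactly
`2^n + 2^(n-k)` formal concepts, and the context `K_01` has exactly
`2^n + 2^k` formal concepts. -/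
theorem stmt8 (n k : ℕ) (hn : 2 ≤ n) (hk1 : 1 ≤ k) (hkn : k < n) :
    Nat.card (Concepts (I02 n k)) = 2 ^ n + 2 ^ (n - k) ∧
    Nat.card (Concepts (I01 n k)) = 2 ^ n + 2 ^ k := by
  have h02 : I02 n k = Igen n (fun g => k ≤ (g : ℕ)) := by
    funext g m; cases g <;> cases m <;> rfl
  have h01 : I01 n k = Igen n (fun g => (g : ℕ) < k) := by
    funext g m; cases g <;> cases m <;> rfl
  rw [h02, h01]
  exact stmt8' n k hn hk1 hkn
end

section
/- For n ≥ 2, the formal context K^1_n = (S_n ∪ {g_1}, S_n ∪ {m_1,m_2}, I), where (g,m) ∈ I iff g,m ∈ S_n and g ≠ m, or g = g_1 and m ∈ S_n, or g = 1 and m = m_1, or g ∈ S_n \ {1} and m = m_2, has exactly 2^n + 2^{n−1} + 1 formal concepts. -/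
/-- The context `K¹_n = (S_n ∪ {g_1}, S_n ∪ {m_1, m_2}, I)`: objects are
`Fin n ⊕ Unit` (with `Sum.inr () = g_1`, and `i : Fin n` coding the element
`i+1` of `S_n = {1,…,n}`); attributes are `Fin n ⊕ Bool` (with
`Sum.inr false = m_1` and `Sum.inr true = m_2`). `(g, m) ∈ I` iff
`g, m ∈ S_n` and `g ≠ m`, or `g = g_1` and `m ∈ S_n`, or `g = 1` (code `0`)
and `m = m_1`, or `g ∈ S_n \ {1}` and `m = m_2`. -/
def K1 (n : ℕ) : (Fin n ⊕ Unit) → (Fin n ⊕ Bool) → Prop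
  | Sum.inl g, Sum.inl m => g ≠ m
  | Sum.inr _, Sum.inl _ => True
  | Sum.inl g, Sum.inr false => (g : ℕ) = 0
  | Sum.inl g, Sum.inr true => (g : ℕ) ≠ 0
  | Sum.inr _, Sum.inr _ => False

namespace Stmt9Aux

variable {n : ℕ}

lemma sub_closure {G M : Type*} (I : G → M → Prop) (A : Set G) :
    A ⊆ extentOf I (intentOf I A) := fun g hg _m hm => hm g hg

/-- Extents containing `g₁`. -/
def extA (U : Set (Fin n)) : Set (Fin n ⊕ Unit) := Sum.inl '' U ∪ {Sum.inr ()}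

/-- Extents inside `Sₙ \ {1}`. -/
def extB (V : Set {i : Fin n // (i : ℕ) ≠ 0}) : Set (Fin n ⊕ Unit) :=
  {g | ∃ i ∈ V, g = Sum.inl i.1}

/-- The extent `{1}`. -/
def extC (hn : 0 < n) : Set (Fin n ⊕ Unit) := {Sum.inl ⟨0, hn⟩}

lemma mem_extA_inl {U : Set (Fin n)} {i : Fin n} : Sum.inl i ∈ extA U ↔ i ∈ U := by
  simp [extA]

lemma mem_extA_inr {U : Set (Fin n)} (u : Unit) : Sum.inr u ∈ extA U := by
  simp [extA]

lemma mem_extB_inl {V : Set {i : Fin n // (i : ℕ) ≠ 0}} {j : {i : Fin n // (i : ℕ) ≠ 0}} :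
    Sum.inl j.1 ∈ extB V ↔ j ∈ V := by
  constructor
  · rintro ⟨i, hi, h⟩
    obtain rfl : i = j := Subtype.ext (Sum.inl.inj h).symm
    exact hi
  · intro h; exact ⟨j, h, rfl⟩

lemma not_mem_extB_inr {V : Set {i : Fin n // (i : ℕ) ≠ 0}} (u : Unit) :
    Sum.inr u ∉ extB V := by
  rintro ⟨i, _, h⟩; cases h

lemma not_mem_extB_zero {V : Set {i : Fin n // (i : ℕ) ≠ 0}} (hn : 0 < n) :
    Sum.inl (⟨0, hn⟩ : Fin n) ∉ extB V := by
  rintro ⟨i, _, h⟩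
  exact i.2 (congrArg Fin.val (Sum.inl.inj h)).symm

lemma closA (U : Set (Fin n)) :
    extentOf (K1 n) (intentOf (K1 n) (extA U)) = extA U := by
  refine Set.Subset.antisymm ?_ (sub_closure _ _)
  rintro (i | u) hg
  · rw [mem_extA_inl]
    by_contra hi
    refine hg (Sum.inl i) ?_ rfl
    rintro (j | u) hgm
    · rw [mem_extA_inl] at hgm
      exact fun h => hi (h ▸ hgm)
    · trivial
  · exact mem_extA_inr u

lemma closB (V : Set {i : Fin n // (i : ℕ) ≠ 0}) :
    extentOf (K1 n) (intentOf (K1 n) (extB V)) = extB V := by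
  refine Set.Subset.antisymm ?_ (sub_closure _ _)
  have hm2 : Sum.inr true ∈ intentOf (K1 n) (extB V) := by
    rintro g ⟨i, _, rfl⟩
    exact i.2
  rintro (i | u) hg
  · have hi0 : (i : ℕ) ≠ 0 := hg (Sum.inr true) hm2
    have : (⟨i, hi0⟩ : {i : Fin n // (i : ℕ) ≠ 0}) ∈ V := by
      by_contra hV
      refine hg (Sum.inl i) ?_ rfl
      rintro g ⟨j, hj, rfl⟩
      intro h
      exact hV (by rwa [show j = ⟨i, hi0⟩ from Subtype.ext h] at hj)
    exact ⟨⟨i, hi0⟩, this, rfl⟩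
  · exact (hg (Sum.inr true) hm2).elim

lemma closC (hn : 0 < n) :
    extentOf (K1 n) (intentOf (K1 n) (extC hn)) = extC hn := by
  refine Set.Subset.antisymm ?_ (sub_closure _ _)
  have hm1 : Sum.inr false ∈ intentOf (K1 n) (extC hn) := by
    rintro g hg
    rw [extC, Set.mem_singleton_iff] at hg
    subst hg
    rfl
  rintro (i | u) hg
  · have : (i : ℕ) = 0 := hg (Sum.inr false) hm1
    rw [extC, Set.mem_singleton_iff]
    exact congrArg Sum.inl (Fin.ext this)
  · exact (hg (Sum.inr false) hm1).elim

/-- Index type for the concepts. -/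
def Idx (n : ℕ) := Set (Fin n) ⊕ Set {i : Fin n // (i : ℕ) ≠ 0} ⊕ Unit

/-- The extent associated to an index. -/
def E (hn : 0 < n) : Idx n → Set (Fin n ⊕ Unit)
  | Sum.inl U => extA U
  | Sum.inr (Sum.inl V) => extB V
  | Sum.inr (Sum.inr _) => extC hn

lemma closE (hn : 0 < n) (x : Idx n) :
    extentOf (K1 n) (intentOf (K1 n) (E hn x)) = E hn x := by
  rcases x with U | V | u
  · exact closA U
  · exact closB V
  · exact closC hn

/-- The map from indices to concepts. -/
def F (hn : 0 < n) (x : Idx n) : Concepts (K1 n) :=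
  ⟨(E hn x, intentOf (K1 n) (E hn x)), rfl, closE hn x⟩

lemma E_injective (hn : 0 < n) : Function.Injective (E hn) := by
  rintro (U | V | u) (U' | V' | u') h <;> simp only [E] at h
  · congr 1
    ext i
    rw [← mem_extA_inl (U := U), ← mem_extA_inl (U := U'), h]
  · have h1 := mem_extA_inr (U := U) ()
    rw [h] at h1
    exact (not_mem_extB_inr () h1).elim
  · have h1 := mem_extA_inr (U := U) ()
    rw [h] at h1
    simp [extC] at h1
  · have h1 := mem_extA_inr (U := U') ()
    rw [← h] at h1
    exact (not_mem_extB_inr () h1).elim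
  · congr 2
    ext j
    rw [← mem_extB_inl (V := V), ← mem_extB_inl (V := V'), h]
  · have h1 : Sum.inl (⟨0, hn⟩ : Fin n) ∈ extC hn := rfl
    rw [← h] at h1
    exact (not_mem_extB_zero hn h1).elim
  · have h1 := mem_extA_inr (U := U') ()
    rw [← h] at h1
    simp [extC] at h1
  · have h1 : Sum.inl (⟨0, hn⟩ : Fin n) ∈ extC hn := rfl
    rw [h] at h1
    exact (not_mem_extB_zero hn h1).elim
  · exact congrArg _ (congrArg _ (Subsingleton.elim u u'))

lemma F_bijective (hn : 0 < n) : Function.Bijective (F hn) := by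
  constructor
  · intro x y h
    exact E_injective hn (congrArg (fun p => p.1.1) h)
  · rintro ⟨⟨A, B⟩, hB, hA⟩
    dsimp only at hB hA
    have hext : ∃ x : Idx n, E hn x = A := by
      by_cases h1 : Sum.inr () ∈ A
      · refine ⟨Sum.inl {i | Sum.inl i ∈ A}, ?_⟩
        ext g
        rcases g with i | u
        · rw [show E hn (Sum.inl _) = extA _ from rfl, mem_extA_inl]
          rfl
        · cases u
          simpa [E, mem_extA_inr] using h1
      · by_cases h0 : Sum.inl (⟨0, hn⟩ : Fin n) ∈ A
        · refine ⟨Sum.inr (Sum.inr ()), Set.Subset.antisymm ?_ ?_⟩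
          · rintro g hg
            simp only [E, extC, Set.mem_singleton_iff] at hg
            subst hg
            exact h0
          · rintro (j | u) hg
            · rw [show E hn (Sum.inr (Sum.inr ())) = extC hn from rfl, extC,
                Set.mem_singleton_iff]
              by_contra hj
              have hj0 : (j : ℕ) ≠ 0 := fun h => hj (congrArg Sum.inl (Fin.ext h))
              apply h1
              rw [← hA]
              rintro (k | b) hm
              · trivial
              · rw [← hB] at hm
                have hAB : ∀ g ∈ A, K1 n g (Sum.inr b) := hm
                cases b
                · exact absurd (hAB (Sum.inl j) hg) hj0
                · exact absurd (hAB (Sum.inl ⟨0, hn⟩) h0) (fun h => h rfl)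
            · cases u
              exact absurd hg h1
        · refine ⟨Sum.inr (Sum.inl {j | Sum.inl j.1 ∈ A}), ?_⟩
          ext g
          rcases g with i | u
          · constructor
            · rintro ⟨j, hj, h⟩
              rw [h]; exact hj
            · intro hi
              have hi0 : (i : ℕ) ≠ 0 := by
                intro h
                exact h0 (by rwa [show (⟨0, hn⟩ : Fin n) = i from Fin.ext h.symm])
              exact ⟨⟨i, hi0⟩, hi, rfl⟩
          · cases u
            constructor
            · intro h
              exact (not_mem_extB_inr () h).elim
            · intro h
              exact (h1 h).elim
    obtain ⟨x, hx⟩ := hext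
    refine ⟨x, ?_⟩
    apply Subtype.ext
    dsimp [F]
    rw [hx, hB]

end Stmt9Aux

/-- For `n ≥ 2`, the context `K¹_n` has exactly `2^n + 2^(n-1) + 1` formal
concepts. -/
theorem stmt9 (n : ℕ) (hn : 2 ≤ n) :
    Nat.card (Concepts (K1 n)) = 2 ^ n + 2 ^ (n - 1) + 1 := by
  classical
  have hn0 : 0 < n := by omega
  have e := Equiv.ofBijective _ (Stmt9Aux.F_bijective (n := n) hn0)
  rw [← Nat.card_congr e]
  show Nat.card (Set (Fin n) ⊕ Set {i : Fin n // (i : ℕ) ≠ 0} ⊕ Unit) = _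
  rw [Nat.card_sum, Nat.card_sum]
  have h1 : Nat.card (Set (Fin n)) = 2 ^ n := by
    rw [Nat.card_eq_fintype_card, Fintype.card_set, Fintype.card_fin]
  have h2 : Nat.card (Set {i : Fin n // (i : ℕ) ≠ 0}) = 2 ^ (n - 1) := by
    rw [Nat.card_eq_fintype_card, Fintype.card_set]
    congr 1
    have e2 : {i : Fin n // (i : ℕ) ≠ 0} ≃ {i : Fin n // ¬ (i = ⟨0, hn0⟩)} :=
      Equiv.subtypeEquivRight (fun i => by simp [Fin.ext_iff])
    rw [Fintype.card_congr e2, Fintype.card_subtype_compl, Fintype.card_fin,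
      Fintype.card_subtype_eq]
  rw [h1, h2, Nat.card_unique]
  ring
end

section
/- Let K = (G, M_0 ∪ {a,b}, I) be a finite formal context, K_00 = (G, M_0, I) the context with the attributes a and b removed, and K_s the ∃-generalized context obtained by replacing a, b with a single attribute s whose extension is s' = a' ∪ b'. With h_X = |{A ∩ X | A ∈ Ext(K_00), A ∩ X ∉ Ext(K_00)}| for X ⊆ G, the increase satisfies |𝔅(K_s)| − |𝔅(K)| ≤ 2^{|a'|+|b'|} − 2^{|a'|} − 2^{|b'|} + 1. -/
/-- The context obtained from `(G, M₀, I₀)` by adding one fresh attribute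
(coded `Sum.inr ()`) with extension `sext`. -/
def addOne {G M₀ : Type*} (I₀ : G → M₀ → Prop) (sext : Set G) :
    G → (M₀ ⊕ Unit) → Prop :=
  fun g m => match m with
    | Sum.inl m' => I₀ g m'
    | Sum.inr _ => g ∈ sext

open Set

lemma mem_ext_iff {G M : Type*} (I : G → M → Prop) (A : Set G) :
    A ∈ Prod.fst '' Concepts I ↔ extentOf I (intentOf I A) = A := by
  constructor
  · rintro ⟨⟨A', B⟩, ⟨h1, h2⟩, rfl⟩
    simp only at h1 h2 ⊢
    rw [h1]; exact h2
  · intro h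
    exact ⟨(A, intentOf I A), ⟨rfl, h⟩, rfl⟩

lemma card_concepts {G M : Type*} (I : G → M → Prop) :
    Nat.card (Concepts I) = (Prod.fst '' Concepts I).ncard := by
  rw [Nat.card_coe_set_eq]
  refine (Set.ncard_image_of_injOn ?_).symm
  rintro ⟨A, B⟩ ⟨h1, _⟩ ⟨A', B'⟩ ⟨h1', _⟩ (h : A = A')
  simp only at h1 h1'
  subst h
  exact Prod.ext rfl (h1 ▸ h1')

lemma ncard_powerset {G : Type*} [Fintype G] (A : Set G) :
    {Y : Set G | Y ⊆ A}.ncard = 2 ^ A.ncard := by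
  classical
  rw [← Nat.card_coe_set_eq, ← Nat.card_coe_set_eq,
    Nat.card_congr (show ↥{Y : Set G | Y ⊆ A} ≃ Set ↥A from Equiv.Set.powerset A)]
  have := Fintype.ofFinite (↥A)
  rw [Nat.card_eq_fintype_card, Nat.card_eq_fintype_card, Fintype.card_set]

lemma ncard_nonempty_powerset {G : Type*} [Fintype G] (A : Set G) :
    {Y : Set G | Y ⊆ A ∧ Y.Nonempty}.ncard = 2 ^ A.ncard - 1 := by
  have h : {Y : Set G | Y ⊆ A ∧ Y.Nonempty} = {Y : Set G | Y ⊆ A} \ {∅} := by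
    ext Y
    simp [Set.nonempty_iff_ne_empty, and_comm]
  rw [h, Set.ncard_diff_singleton_of_mem (by simp), _root_.ncard_powerset]

lemma card_D {G : Type*} [Fintype G] (aext bext : Set G) :
    {X : Set G | X ⊆ aext ∪ bext ∧ ¬ X ⊆ aext ∧ ¬ X ⊆ bext}.ncard ≤
      (2 ^ aext.ncard - 1) * (2 ^ bext.ncard - 1) := by
  classical
  set Sa := {Y : Set G | Y ⊆ aext ∧ Y.Nonempty}
  set Sb := {Y : Set G | Y ⊆ bext ∧ Y.Nonempty}
  have hle : {X : Set G | X ⊆ aext ∪ bext ∧ ¬ X ⊆ aext ∧ ¬ X ⊆ bext}.ncard ≤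
      (Sa ×ˢ Sb).ncard := by
    apply Set.ncard_le_ncard_of_injOn (fun X => (X ∩ aext, X ∩ bext))
    · rintro X ⟨hsub, hna, hnb⟩
      constructor
      · refine ⟨Set.inter_subset_right, ?_⟩
        obtain ⟨x, hx, hxb⟩ := Set.not_subset.mp hnb
        exact ⟨x, hx, (hsub hx).resolve_right hxb⟩
      · refine ⟨Set.inter_subset_right, ?_⟩
        obtain ⟨x, hx, hxa⟩ := Set.not_subset.mp hna
        exact ⟨x, hx, (hsub hx).resolve_left hxa⟩
    · rintro X ⟨hXs, -, -⟩ Y ⟨hYs, -, -⟩ h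
      have h1 : X ∩ aext = Y ∩ aext := congrArg Prod.fst h
      have h2 : X ∩ bext = Y ∩ bext := congrArg Prod.snd h
      calc X = X ∩ (aext ∪ bext) := by rw [Set.inter_eq_left.mpr hXs]
        _ = (X ∩ aext) ∪ (X ∩ bext) := Set.inter_union_distrib_left ..
        _ = (Y ∩ aext) ∪ (Y ∩ bext) := by rw [h1, h2]
        _ = Y ∩ (aext ∪ bext) := (Set.inter_union_distrib_left ..).symm
        _ = Y := Set.inter_eq_left.mpr hYs
  refine hle.trans ?_
  rw [← Nat.card_coe_set_eq, Nat.card_congr (Equiv.Set.prod Sa Sb),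
    Nat.card_prod, Nat.card_coe_set_eq, Nat.card_coe_set_eq,
    ncard_nonempty_powerset, ncard_nonempty_powerset]

/-- Let `K = (G, M₀ ∪ {a, b}, I)` be a finite formal context (the attributes
`a` and `b` are coded as `Sum.inr false` and `Sum.inr true`), and let `K_s`
be the ∃-generalized context obtained by removing `a, b` and adding a single
attribute `s` with extension `s' = a' ∪ b'`. Then
`|𝔅(K_s)| − |𝔅(K)| ≤ 2^(|a'|+|b'|) − 2^|a'| − 2^|b'| + 1`. -/
theorem stmt18 {G M₀ : Type*} [Fintype G] [Fintype M₀]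
    (I : G → (M₀ ⊕ Bool) → Prop) (aext bext : Set G)
    (ha : aext = {g | I g (Sum.inr false)})
    (hb : bext = {g | I g (Sum.inr true)}) :
    (Nat.card (Concepts (addOne (fun g m => I g (Sum.inl m)) (aext ∪ bext))) : ℤ) -
        Nat.card (Concepts I) ≤
      2 ^ (aext.ncard + bext.ncard) - 2 ^ aext.ncard - 2 ^ bext.ncard + 1 := by
  classical
  set Is := addOne (fun g m => I g (Sum.inl m)) (aext ∪ bext) with hIs
  set E := Prod.fst '' Concepts I
  set Es := Prod.fst '' Concepts Is
  set D := {X : Set G | X ⊆ aext ∪ bext ∧ ¬ X ⊆ aext ∧ ¬ X ⊆ bext} with hD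
  -- structural inclusion
  have hsub : Es ⊆ E ∪ D := by
    intro X hX
    rw [mem_ext_iff] at hX
    -- helper: closure under K when X closed under K_s and some condition
    by_cases hA : X ⊆ aext
    · left
      rw [mem_ext_iff]
      refine Set.Subset.antisymm ?_ (fun g hg m hm => hm g hg)
      intro g hg
      rw [← hX]
      intro m hm
      cases m with
      | inl m₀ =>
          exact hg (Sum.inl m₀) (fun g' hg' => hm g' hg')
      | inr u =>
          have : g ∈ aext := by
            rw [ha]
            exact hg (Sum.inr false) (fun g' hg' => by
              have := hA hg'; rw [ha] at this; exact this)
          exact Or.inl this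
    · by_cases hB : X ⊆ bext
      · left
        rw [mem_ext_iff]
        refine Set.Subset.antisymm ?_ (fun g hg m hm => hm g hg)
        intro g hg
        rw [← hX]
        intro m hm
        cases m with
        | inl m₀ =>
            exact hg (Sum.inl m₀) (fun g' hg' => hm g' hg')
        | inr u =>
            have : g ∈ bext := by
              rw [hb]
              exact hg (Sum.inr true) (fun g' hg' => by
                have := hB hg'; rw [hb] at this; exact this)
            exact Or.inr this
      · by_cases hU : X ⊆ aext ∪ bext
        · right; exact ⟨hU, hA, hB⟩
        · left
          rw [mem_ext_iff]
          refine Set.Subset.antisymm ?_ (fun g hg m hm => hm g hg)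
          intro g hg
          rw [← hX]
          intro m hm
          cases m with
          | inl m₀ =>
              exact hg (Sum.inl m₀) (fun g' hg' => hm g' hg')
          | inr u =>
              exact absurd (fun g' hg' => hm g' hg') hU
  -- cardinalities
  have h1 : Nat.card (Concepts Is) ≤ Nat.card (Concepts I) + D.ncard := by
    rw [card_concepts, card_concepts]
    calc Es.ncard ≤ (E ∪ D).ncard := Set.ncard_le_ncard hsub (Set.toFinite _)
      _ ≤ E.ncard + D.ncard := Set.ncard_union_le E D
  have h2 : D.ncard ≤ (2 ^ aext.ncard - 1) * (2 ^ bext.ncard - 1) := card_D aext bext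
  have h3 : (1 : ℕ) ≤ 2 ^ aext.ncard := Nat.one_le_two_pow
  have h4 : (1 : ℕ) ≤ 2 ^ bext.ncard := Nat.one_le_two_pow
  have h5 : ((2 ^ aext.ncard - 1) * (2 ^ bext.ncard - 1) : ℕ) =
      ((2 ^ aext.ncard - 1 : ℤ) * (2 ^ bext.ncard - 1 : ℤ)) := by
    push_cast [h3, h4]
    ring
  have := (Nat.cast_le (α := ℤ)).mpr (h1.trans (Nat.add_le_add_left h2 _))
  push_cast [h5] at this
  linarith [this, sq_nonneg ((2:ℤ) ^ aext.ncard), pow_add (2:ℤ) aext.ncard bext.ncard]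
end
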